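/- Let l₁, …, l_s be linear forms on ℚⁿ and let d_{ij} (for 1 ≤ i ≤ r, 1 ≤ j ≤ s) be nonnegative integers. Set Pᵢ = ∏ⱼ lⱼ^{d_{ij}} and D = ∑ⱼ maxᵢ d_{ij}. If the ideal J = (P₁, …, Pᵣ) of ℚ[x₁, …, xₙ] has finite codimension, then every homogeneous polynomial of degree at least D − n + 1 lies in J. -/

import Mathlib

open MvPolynomial

namespace EfimovAux

lemma exists_single_of_degree_one {σ : Type*} {dd : σ →₀ ℕ} (h : dd.degree = 1) :
    ∃ k, dd = Finsupp.single k 1 := by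
  classical
  have hsum : ∑ i ∈ dd.support, dd i = 1 := h
  obtain ⟨k, hk⟩ : dd.support.Nonempty := by
    rw [Finsupp.support_nonempty_iff]
    rintro rfl
    simp at h
  refine ⟨k, ?_⟩
  have hk1 : 1 ≤ dd k := Nat.one_le_iff_ne_zero.mpr (Finsupp.mem_support_iff.mp hk)
  have hdk : dd k = 1 :=
    le_antisymm (hsum ▸ Finset.single_le_sum (fun _ _ => Nat.zero_le _) hk) hk1
  rw [Finsupp.eq_single_iff]
  refine ⟨?_, hdk⟩
  intro x hx
  simp only [Finset.mem_singleton]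
  by_contra hne
  have hx1 : 1 ≤ dd x := Nat.one_le_iff_ne_zero.mpr (Finsupp.mem_support_iff.mp hx)
  have hsub : ({x, k} : Finset σ) ⊆ dd.support := by
    intro y hy
    rcases Finset.mem_insert.mp hy with rfl | hy
    · exact hx
    · rwa [Finset.mem_singleton.mp hy]
  have : 2 ≤ ∑ i ∈ dd.support, dd i := by
    calc 2 ≤ dd x + dd k := by omega
    _ = ∑ i ∈ ({x, k} : Finset σ), dd i := (Finset.sum_pair hne).symm
    _ ≤ ∑ i ∈ dd.support, dd i :=
        Finset.sum_le_sum_of_subset hsub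
  omega

lemma degree_of_isHomogeneous {σ : Type*} {f : MvPolynomial σ ℚ} {m : ℕ}
    (hf : f.IsHomogeneous m) {dd : σ →₀ ℕ} (h : coeff dd f ≠ 0) : dd.degree = m := by
  have := hf h
  rwa [Finsupp.degree_eq_weight_one]

lemma linear_decomp {σ : Type*} [Fintype σ] [DecidableEq σ] {f : MvPolynomial σ ℚ}
    (hf : f.IsHomogeneous 1) :
    f = ∑ k, MvPolynomial.C (coeff (Finsupp.single k 1) f) * X k := by
  apply MvPolynomial.ext
  intro dd
  rw [MvPolynomial.coeff_sum]
  simp only [coeff_C_mul, coeff_X']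
  by_cases h : ∃ k, dd = Finsupp.single k 1
  · obtain ⟨k, rfl⟩ := h
    rw [Finset.sum_eq_single k]
    · simp
    · intro k' _ hne
      rw [if_neg, mul_zero]
      intro hcontra
      exact hne ((Finsupp.single_left_inj one_ne_zero).mp hcontra)
    · simp
  · have h0 : coeff dd f = 0 := by
      by_contra hc
      exact h (by
        obtain ⟨k, hk⟩ := exists_single_of_degree_one (degree_of_isHomogeneous hf hc)
        exact ⟨k, hk⟩)
    rw [h0]
    rw [Finset.sum_eq_zero]
    intro k _
    rw [if_neg (fun hc => h ⟨k, hc.symm⟩), mul_zero]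

lemma hc_mul {σ : Type*} {B : MvPolynomial σ ℚ} {t : ℕ}
    (hB : B.IsHomogeneous t) (A : MvPolynomial σ ℚ) (m : ℕ) :
    homogeneousComponent m (A * B) =
      if t ≤ m then homogeneousComponent (m - t) A * B else 0 := by
  induction A using MvPolynomial.induction_on' with
  | monomial v c =>
    have hmono : (monomial v c : MvPolynomial σ ℚ).IsHomogeneous v.degree :=
      isHomogeneous_monomial _ rfl
    have hprod : ((monomial v c : MvPolynomial σ ℚ) * B).IsHomogeneous (v.degree + t) :=
      hmono.mul hB
    rw [homogeneousComponent_of_mem ((mem_homogeneousSubmodule _ _).mpr hprod),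
        homogeneousComponent_of_mem ((mem_homogeneousSubmodule _ _).mpr hmono)]
    by_cases h : t ≤ m
    · rw [if_pos h]
      by_cases h2 : m = v.degree + t
      · rw [if_pos h2, if_pos (show m - t = v.degree by omega)]
      · rw [if_neg h2, if_neg (show ¬ (m - t = v.degree) by omega), zero_mul]
    · rw [if_neg h, if_neg (show ¬ (m = v.degree + t) by omega)]
  | add p q hp hq =>
    rw [add_mul, map_add, map_add, hp, hq]
    split_ifs
    · rw [add_mul]
    · rw [add_zero]

lemma isHomogeneous_aeval {σ τ : Type*} {f : MvPolynomial σ ℚ} {m : ℕ}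
    (hf : f.IsHomogeneous m) (g : σ → MvPolynomial τ ℚ)
    (hg : ∀ i, (g i).IsHomogeneous 1) :
    (aeval g f).IsHomogeneous m := by
  have := hf.eval₂ (algebraMap ℚ (MvPolynomial τ ℚ)) g
    (fun r => by rw [MvPolynomial.algebraMap_eq]; exact isHomogeneous_C τ r) hg
  rw [MvPolynomial.aeval_def]
  simpa only [mul_one, one_mul] using this

lemma not_fd {σ : Type*} [Nonempty σ] : ¬ FiniteDimensional ℚ (MvPolynomial σ ℚ) := by
  intro h
  have h2 : Finite (σ →₀ ℕ) := Module.Finite.finite_basis (MvPolynomial.basisMonomials σ ℚ)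
  exact @not_finite (σ →₀ ℕ) _ h2

lemma fd_quot_mono {A : Type*} [CommRing A] [Algebra ℚ A] {I I' : Ideal A} (h : I ≤ I')
    (hfd : FiniteDimensional ℚ (A ⧸ I)) : FiniteDimensional ℚ (A ⧸ I') := by
  let f : (A ⧸ I) →ₐ[ℚ] (A ⧸ I') :=
    Ideal.Quotient.liftₐ I (Ideal.Quotient.mkₐ ℚ I') (fun a ha => by
      rw [Ideal.Quotient.mkₐ_eq_mk, Ideal.Quotient.eq_zero_iff_mem]
      exact h ha)
  have hsurj : Function.Surjective f := by
    intro x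
    obtain ⟨a, rfl⟩ := Ideal.Quotient.mkₐ_surjective ℚ I' x
    exact ⟨Ideal.Quotient.mk I a, by simp [f, Ideal.Quotient.liftₐ_apply]; rfl⟩
  exact Module.Finite.of_surjective f.toLinearMap hsurj

lemma fd_of_quot_bot {A : Type*} [CommRing A] [Algebra ℚ A]
    (hfd : FiniteDimensional ℚ (A ⧸ (⊥ : Ideal A))) : FiniteDimensional ℚ A := by
  have hinj : Function.Injective (Ideal.Quotient.mkₐ ℚ (⊥ : Ideal A)) := by
    intro a b hab
    have h2 : a - b ∈ (⊥ : Ideal A) := Ideal.Quotient.eq.mp hab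
    rw [Ideal.mem_bot, sub_eq_zero] at h2
    exact h2
  let e := AlgEquiv.ofBijective (Ideal.Quotient.mkₐ ℚ (⊥ : Ideal A))
    ⟨hinj, Ideal.Quotient.mkₐ_surjective ℚ _⟩
  exact Module.Finite.equiv e.symm.toLinearEquiv
lemma master (N : ℕ) : ∀ (σ ι κ : Type) [Fintype σ] [Fintype ι] [Fintype κ]
    (l : κ → MvPolynomial σ ℚ) (_hl : ∀ j, (l j).IsHomogeneous 1)
    (d : ι → κ → ℕ) (D : ℕ)
    (_hD : (∑ j, Finset.univ.sup (fun i => d i j)) ≤ D)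
    (_hN : Fintype.card σ + D ≤ N)
    (_hfin : FiniteDimensional ℚ
      (MvPolynomial σ ℚ ⧸ Ideal.span (Set.range (fun i => ∏ j, l j ^ d i j))))
    (m : ℕ) (Q : MvPolynomial σ ℚ) (_hQ : Q.IsHomogeneous m)
    (_hm : (D : ℤ) - (Fintype.card σ : ℤ) + 1 ≤ (m : ℤ)),
    Q ∈ Ideal.span (Set.range (fun i => ∏ j, l j ^ d i j)) := by
  induction N using Nat.strong_induction_on with
  | _ N IH =>
  intro σ ι κ _ _ _ l hl d D hD hN hfin m Q hQ hm
  classical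
  set P : ι → MvPolynomial σ ℚ := fun i => ∏ j, l j ^ d i j with hPdef
  set J : Ideal (MvPolynomial σ ℚ) := Ideal.span (Set.range P) with hJdef
  -- trivial case : some generator is 1
  by_cases h1 : ∃ i, ∀ j, d i j = 0
  · obtain ⟨i, hi⟩ := h1
    have hone : (1 : MvPolynomial σ ℚ) ∈ J := by
      have hPi : P i = 1 := by simp [hPdef, hi]
      rw [← hPi]
      exact Ideal.subset_span ⟨i, rfl⟩
    rw [(Ideal.eq_top_iff_one J).mpr hone]
    exact Submodule.mem_top
  by_cases h2 : ∃ j₀, 1 ≤ Finset.univ.sup (fun i => d i j₀) ∧ l j₀ ≠ 0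
  swap
  -- degenerate case : every generator is 0, so J = ⊥ and σ is empty
  · push_neg at h1 h2
    have hP0 : ∀ i, P i = 0 := by
      intro i
      obtain ⟨j, hj⟩ := h1 i
      have hc : 1 ≤ Finset.univ.sup (fun i => d i j) :=
        le_trans (Nat.one_le_iff_ne_zero.mpr hj)
          (Finset.le_sup (f := fun i : ι => d i j) (Finset.mem_univ i))
      have hlj : l j = 0 := h2 j hc
      exact Finset.prod_eq_zero (Finset.mem_univ j) (by rw [hlj]; exact zero_pow hj)
    have hJbot : J = ⊥ := by
      rw [hJdef]
      refine le_antisymm (Ideal.span_le.mpr ?_) bot_le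
      rintro x ⟨i, rfl⟩
      simp [hP0 i]
    have hfd : FiniteDimensional ℚ (MvPolynomial σ ℚ) := fd_of_quot_bot (hJbot ▸ hfin)
    have hσ : IsEmpty σ := by
      by_contra hne
      rw [not_isEmpty_iff] at hne
      exact not_fd hfd
    have hn0 : Fintype.card σ = 0 := Fintype.card_eq_zero
    have hm1 : 1 ≤ m := by omega
    have hQ0 : Q = 0 := by
      apply MvPolynomial.ext
      intro dd
      rw [coeff_zero]
      by_contra hc
      have hdeg : dd.degree = m := degree_of_isHomogeneous hQ hc
      have hdd : dd = 0 := Finsupp.ext (fun a => isEmptyElim a)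
      rw [hdd] at hdeg
      simp only [map_zero] at hdeg
      omega
    rw [hQ0]
    exact Ideal.zero_mem J
  obtain ⟨j₀, hc1, hlj₀⟩ := h2
  set c : ℕ := Finset.univ.sup (fun i => d i j₀) with hcdef
  have hcD : c ≤ D :=
    le_trans (Finset.single_le_sum (f := fun j => Finset.univ.sup (fun i => d i j))
      (fun j _ => Nat.zero_le _) (Finset.mem_univ j₀)) hD
  -- pick the pivot variable k₀
  obtain ⟨k₀, hk₀⟩ : ∃ k, coeff (Finsupp.single k 1) (l j₀) ≠ 0 := by
    by_contra hall
    push_neg at hall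
    apply hlj₀
    conv_lhs => rw [linear_decomp (hl j₀)]
    simp [hall]
  set a : ℚ := coeff (Finsupp.single k₀ 1) (l j₀) with hadef
  have hn1 : 1 ≤ Fintype.card σ := Fintype.card_pos_iff.mpr ⟨k₀⟩
  set T : MvPolynomial σ ℚ :=
    ∑ k ∈ Finset.univ.erase k₀, C (coeff (Finsupp.single k 1) (l j₀)) * X k with hTdef
  have hsplit : l j₀ = C a * X k₀ + T := by
    conv_lhs => rw [linear_decomp (hl j₀)]
    rw [← Finset.add_sum_erase _ _ (Finset.mem_univ k₀)]
  -- the two substitutions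
  set g : σ → MvPolynomial {k : σ // k ≠ k₀} ℚ := fun k =>
    if h : k = k₀ then
      (-(a⁻¹)) • ∑ k' : {k : σ // k ≠ k₀}, C (coeff (Finsupp.single k'.val 1) (l j₀)) * X k'
    else X ⟨k, h⟩ with hgdef
  have hgk₀ : g k₀ = (-(a⁻¹)) •
      ∑ k' : {k : σ // k ≠ k₀}, C (coeff (Finsupp.single k'.val 1) (l j₀)) * X k' := by
    rw [hgdef]
    exact dif_pos rfl
  have hgk : ∀ (k : σ) (hk : k ≠ k₀), g k = X ⟨k, hk⟩ := by
    intro k hk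
    rw [hgdef]
    exact dif_neg hk
  have hg1 : ∀ k, (g k).IsHomogeneous 1 := by
    intro k
    by_cases h : k = k₀
    · subst h
      rw [hgk₀, ← mem_homogeneousSubmodule]
      refine Submodule.smul_mem _ _ (Submodule.sum_mem _ fun k' _ => ?_)
      rw [mem_homogeneousSubmodule]
      exact isHomogeneous_C_mul_X _ _
    · rw [hgk k h]
      exact isHomogeneous_X _ _
  set π : MvPolynomial σ ℚ →ₐ[ℚ] MvPolynomial {k : σ // k ≠ k₀} ℚ := aeval g with hπdef
  set ρ : MvPolynomial {k : σ // k ≠ k₀} ℚ →ₐ[ℚ] MvPolynomial σ ℚ :=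
    rename Subtype.val with hρdef
  have hπρ : ∀ y, π (ρ y) = y := by
    have hcomp : π.comp ρ = AlgHom.id ℚ (MvPolynomial {k : σ // k ≠ k₀} ℚ) := by
      apply MvPolynomial.algHom_ext
      intro k'
      simp only [AlgHom.comp_apply, AlgHom.id_apply, hρdef, rename_X, hπdef, aeval_X]
      rw [hgk _ k'.2]
    intro y
    exact DFunLike.congr_fun hcomp y
  have hρg₀ : ρ (g k₀) = (-(a⁻¹)) • T := by
    rw [hgk₀, map_smul, map_sum]
    simp only [map_mul, hρdef, rename_C, rename_X]
    congr 1
    rw [hTdef]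
    exact (Finset.sum_subtype _ (fun x => by simp) fun k =>
      C (coeff (Finsupp.single k 1) (l j₀)) * X k).symm
  have hsmul : X k₀ - ρ (g k₀) = (a⁻¹ : ℚ) • l j₀ := by
    rw [hρg₀, hsplit, smul_add, neg_smul, sub_neg_eq_add,
      smul_eq_C_mul (C a * X k₀) a⁻¹, ← mul_assoc, ← C_mul, inv_mul_cancel₀ hk₀, C_1, one_mul]
  have hπℓ : π (l j₀) = 0 := by
    have h0 : π (X k₀ - ρ (g k₀)) = 0 := by
      rw [map_sub, hπρ (g k₀), hπdef, aeval_X, sub_self]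
    rw [hsmul, map_smul] at h0
    have h1 : (a : ℚ) • ((a⁻¹ : ℚ) • π (l j₀)) = 0 := by rw [h0, smul_zero]
    rwa [smul_smul, mul_inv_cancel₀ hk₀, one_smul] at h1
  have hsub : ∀ f, ρ (π f) - f ∈ Ideal.span {l j₀} := by
    have hcomp : (Ideal.Quotient.mkₐ ℚ (Ideal.span {l j₀})).comp (ρ.comp π)
        = Ideal.Quotient.mkₐ ℚ (Ideal.span {l j₀}) := by
      apply MvPolynomial.algHom_ext
      intro k
      simp only [AlgHom.comp_apply, hπdef, aeval_X]
      by_cases hk : k = k₀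
      · rw [hk]
        simp only [Ideal.Quotient.mkₐ_eq_mk]
        rw [Ideal.Quotient.eq]
        have hneg : ρ (g k₀) - X k₀ = -((a⁻¹ : ℚ) • l j₀) := by
          rw [← hsmul]; ring
        rw [hneg]
        refine neg_mem ?_
        rw [smul_eq_C_mul]
        exact Ideal.mul_mem_left _ _ (Ideal.subset_span rfl)
      · rw [hgk _ hk]
        simp [hρdef]
    intro f
    have hfc := DFunLike.congr_fun hcomp f
    simp only [AlgHom.comp_apply, Ideal.Quotient.mkₐ_eq_mk] at hfc
    exact Ideal.Quotient.eq.mp hfc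
  -- homogeneity of generators
  have hPhom : ∀ i : ι, (P i).IsHomogeneous (∑ j, d i j) := by
    intro i
    rw [hPdef]
    exact IsHomogeneous.prod Finset.univ (fun j => l j ^ d i j) (fun j => d i j)
      (fun j _ => by simpa using (hl j).pow (d i j))
  -- ============ surjectivity step : reduce modulo l j₀ ============
  set l' : κ → MvPolynomial {k : σ // k ≠ k₀} ℚ := fun j => π (l j) with hl'def
  have hl' : ∀ j, (l' j).IsHomogeneous 1 := by
    intro j
    rw [hl'def]
    simp only [hπdef]
    exact isHomogeneous_aeval (hl j) g hg1
  set d' : {i : ι // d i j₀ = 0} → κ → ℕ := fun i j => d i.val j with hd'def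
  have hπP : ∀ i : ι, π (P i) = ∏ j, l' j ^ d i j := by
    intro i
    rw [hPdef]
    rw [map_prod]
    simp only [map_pow]
    rfl
  have hπP0 : ∀ i : ι, d i j₀ ≠ 0 → π (P i) = 0 := by
    intro i h
    rw [hπP i]
    refine Finset.prod_eq_zero (Finset.mem_univ j₀) ?_
    rw [hl'def]
    simp only []
    rw [hπℓ]
    exact zero_pow h
  set J' : Ideal (MvPolynomial {k : σ // k ≠ k₀} ℚ) :=
    Ideal.span (Set.range (fun i => ∏ j, l' j ^ d' i j)) with hJ'def
  have hgen : ∀ i : ι, ((Ideal.Quotient.mkₐ ℚ J').comp π) (P i) = 0 := by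
    intro i
    by_cases hij : d i j₀ = 0
    · have heq : π (P i) = ∏ j, l' j ^ d' (⟨i, hij⟩ : {i : ι // d i j₀ = 0}) j := hπP i
      simp only [AlgHom.comp_apply, heq, Ideal.Quotient.mkₐ_eq_mk, Ideal.Quotient.eq_zero_iff_mem]
      rw [hJ'def]
      exact Ideal.subset_span ⟨⟨i, hij⟩, rfl⟩
    · simp only [AlgHom.comp_apply, hπP0 i hij, map_zero]
  have hfin' : FiniteDimensional ℚ (MvPolynomial {k : σ // k ≠ k₀} ℚ ⧸ J') := by
    have hker : ∀ x ∈ J, ((Ideal.Quotient.mkₐ ℚ J').comp π) x = 0 := by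
      intro x hx
      have hle : J ≤ RingHom.ker (((Ideal.Quotient.mkₐ ℚ J').comp π) :
          MvPolynomial σ ℚ →+* MvPolynomial {k : σ // k ≠ k₀} ℚ ⧸ J') := by
        rw [hJdef]
        refine Ideal.span_le.mpr ?_
        rintro x ⟨i, rfl⟩
        simp only [SetLike.mem_coe, RingHom.mem_ker]
        exact hgen i
      exact RingHom.mem_ker.mp (hle hx)
    let Φq := Ideal.Quotient.liftₐ J ((Ideal.Quotient.mkₐ ℚ J').comp π) hker
    have hsurj : Function.Surjective Φq := by
      intro y
      obtain ⟨z, rfl⟩ := Ideal.Quotient.mkₐ_surjective ℚ J' y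
      refine ⟨Ideal.Quotient.mk J (ρ z), ?_⟩
      have happ : Φq (Ideal.Quotient.mk J (ρ z)) = ((Ideal.Quotient.mkₐ ℚ J').comp π) (ρ z) := by
        simp [Φq, Ideal.Quotient.liftₐ_apply]; rfl
      rw [happ]
      simp only [AlgHom.comp_apply, hπρ z]
    exact Module.Finite.of_surjective Φq.toLinearMap hsurj
  -- cardinality of the smaller variable set
  have hcard : Fintype.card {k : σ // k ≠ k₀} = Fintype.card σ - 1 := by
    have h := Fintype.card_subtype_compl (fun k : σ => k = k₀)
    rw [Fintype.card_subtype_eq] at h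
    exact h
  -- degree bound for the reduced system
  have hD' : (∑ j, Finset.univ.sup fun i' : {i : ι // d i j₀ = 0} => d' i' j) ≤ D - c := by
    have e1 : (∑ j, Finset.univ.sup fun i' : {i : ι // d i j₀ = 0} => d' i' j)
        = (Finset.univ.sup fun i' : {i : ι // d i j₀ = 0} => d' i' j₀)
          + ∑ j ∈ Finset.univ.erase j₀,
              Finset.univ.sup fun i' : {i : ι // d i j₀ = 0} => d' i' j :=
      (Finset.add_sum_erase Finset.univ
        (fun j => Finset.univ.sup fun i' : {i : ι // d i j₀ = 0} => d' i' j)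
        (Finset.mem_univ j₀)).symm
    have e2 : (Finset.univ.sup fun i : ι => d i j₀)
          + ∑ j ∈ Finset.univ.erase j₀, Finset.univ.sup (fun i : ι => d i j)
        = ∑ j, Finset.univ.sup fun i : ι => d i j :=
      Finset.add_sum_erase Finset.univ
        (fun j => Finset.univ.sup fun i : ι => d i j) (Finset.mem_univ j₀)
    have hz : (Finset.univ.sup fun i' : {i : ι // d i j₀ = 0} => d' i' j₀) = 0 := by
      refine Nat.le_antisymm (Finset.sup_le fun i' _ => ?_) (Nat.zero_le _)
      simp only [hd'def]
      exact le_of_eq i'.2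
    have h3 : (∑ j ∈ Finset.univ.erase j₀,
          Finset.univ.sup fun i' : {i : ι // d i j₀ = 0} => d' i' j)
        ≤ ∑ j ∈ Finset.univ.erase j₀, Finset.univ.sup (fun i : ι => d i j) :=
      Finset.sum_le_sum fun j _ => Finset.sup_le fun i' _ =>
        Finset.le_sup (f := fun i : ι => d i j) (Finset.mem_univ i'.val)
    omega
  -- apply the inductive hypothesis to the reduced system
  have hQ' : (π Q).IsHomogeneous m := by
    rw [hπdef]
    exact isHomogeneous_aeval hQ g hg1
  have hmem' : π Q ∈ Ideal.span (Set.range (fun i => ∏ j, l' j ^ d' i j)) :=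
    IH (Fintype.card {k : σ // k ≠ k₀} + (D - c)) (by omega)
      {k : σ // k ≠ k₀} {i : ι // d i j₀ = 0} κ l' hl' d' (D - c) hD' le_rfl
      (by rw [← hJ'def]; exact hfin') m (π Q) hQ' (by omega)
  obtain ⟨b, hb⟩ := Ideal.mem_span_range_iff_exists_fun.mp hmem'
  set A : MvPolynomial σ ℚ := ∑ i' : {i : ι // d i j₀ = 0}, ρ (b i') * P i'.val with hAdef
  have hρP' : ∀ i' : {i : ι // d i j₀ = 0},
      ρ (∏ j, l' j ^ d' i' j) - P i'.val ∈ Ideal.span {l j₀} := by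
    intro i'
    have heq : (∏ j, l' j ^ d' i' j) = π (P i'.val) := (hπP i'.val).symm
    rw [heq]
    exact hsub (P i'.val)
  have hQA : Q - A ∈ Ideal.span {l j₀} := by
    have hA1 : ρ (π Q) - Q ∈ Ideal.span {l j₀} := hsub Q
    have hA2 : ρ (π Q) - A ∈ Ideal.span {l j₀} := by
      rw [← hb, map_sum]
      have heq : (∑ i' : {i : ι // d i j₀ = 0}, ρ (b i' * ∏ j, l' j ^ d' i' j)) - A
          = ∑ i' : {i : ι // d i j₀ = 0},
              ρ (b i') * (ρ (∏ j, l' j ^ d' i' j) - P i'.val) := by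
        rw [hAdef, ← Finset.sum_sub_distrib]
        exact Finset.sum_congr rfl fun i' _ => by rw [map_mul, mul_sub]
      rw [heq]
      exact Ideal.sum_mem _ fun i' _ => Ideal.mul_mem_left _ _ (hρP' i')
    have hmem := Submodule.sub_mem _ hA2 hA1
    simpa using hmem
  obtain ⟨t, ht⟩ : ∃ t, Q - A = l j₀ * t := Ideal.mem_span_singleton.mp hQA
  have hQeq : A + t * l j₀ = Q := by
    rw [mul_comm t (l j₀), ← ht]; ring
  -- take degree-m homogeneous components
  have hQm : homogeneousComponent m Q = Q := by
    rw [homogeneousComponent_of_mem ((mem_homogeneousSubmodule _ _).mpr hQ), if_pos rfl]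
  have key : Q = homogeneousComponent m A +
      (if 1 ≤ m then homogeneousComponent (m - 1) t * l j₀ else 0) := by
    calc Q = homogeneousComponent m Q := hQm.symm
    _ = homogeneousComponent m (A + t * l j₀) := by rw [hQeq]
    _ = homogeneousComponent m A + homogeneousComponent m (t * l j₀) := map_add _ _ _
    _ = _ := by rw [hc_mul (hl j₀) t m]
  have hAJ : A ∈ J := by
    rw [hAdef]
    refine Ideal.sum_mem _ fun i' _ => Ideal.mul_mem_left _ _ ?_
    rw [hJdef]
    exact Ideal.subset_span ⟨i'.val, rfl⟩
  have hhcA : homogeneousComponent m A ∈ J := by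
    rw [hAdef, map_sum]
    refine Ideal.sum_mem _ fun i' _ => ?_
    rw [hc_mul (hPhom i'.val) _ m]
    split_ifs
    · refine Ideal.mul_mem_left _ _ ?_
      rw [hJdef]
      exact Ideal.subset_span ⟨i'.val, rfl⟩
    · exact Ideal.zero_mem _
  by_cases hm1 : 1 ≤ m
  swap
  · rw [key, if_neg hm1, add_zero]
    exact hhcA
  rw [key, if_pos hm1]
  refine Ideal.add_mem _ hhcA ?_
  set B : MvPolynomial σ ℚ := homogeneousComponent (m - 1) t with hBdef
  -- ============ colon step : divide the pivot column by l j₀ ============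
  set d'' : ι → κ → ℕ := fun i j => if j = j₀ then d i j - 1 else d i j with hd''def
  set P'' : ι → MvPolynomial σ ℚ := fun i => ∏ j, l j ^ d'' i j with hP''def
  have hP''P : ∀ i, d i j₀ = 0 → P'' i = P i := by
    intro i h
    show (∏ j, l j ^ d'' i j) = ∏ j, l j ^ d i j
    refine Finset.prod_congr rfl fun j _ => ?_
    congr 1
    simp only [hd''def]
    by_cases hj : j = j₀
    · subst hj; simp [h]
    · simp [hj]
  have hmulP : ∀ i, d i j₀ ≠ 0 → l j₀ * P'' i = P i := by
    intro i h
    show l j₀ * (∏ j, l j ^ d'' i j) = ∏ j, l j ^ d i j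
    rw [← Finset.mul_prod_erase Finset.univ (fun j => l j ^ d'' i j) (Finset.mem_univ j₀),
        ← Finset.mul_prod_erase Finset.univ (fun j => l j ^ d i j) (Finset.mem_univ j₀)]
    have he : (∏ j ∈ Finset.univ.erase j₀, l j ^ d'' i j)
        = ∏ j ∈ Finset.univ.erase j₀, l j ^ d i j :=
      Finset.prod_congr rfl fun j hj => by
        simp only [hd''def, if_neg (Finset.ne_of_mem_erase hj)]
    rw [he, ← mul_assoc]
    congr 1
    have hd''j₀ : d'' i j₀ = d i j₀ - 1 := by simp [hd''def]
    rw [hd''j₀, ← pow_succ']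
    congr 1
    omega
  have hℓP'' : ∀ i, l j₀ * P'' i ∈ J := by
    intro i
    by_cases h : d i j₀ = 0
    · rw [hP''P i h]
      refine Ideal.mul_mem_left _ _ ?_
      rw [hJdef]; exact Ideal.subset_span ⟨i, rfl⟩
    · rw [hmulP i h, hJdef]
      exact Ideal.subset_span ⟨i, rfl⟩
  have hJle : J ≤ Ideal.span (Set.range (fun i => ∏ j, l j ^ d'' i j)) := by
    rw [hJdef]
    refine Ideal.span_le.mpr ?_
    rintro x ⟨i, rfl⟩
    show P i ∈ _
    by_cases h : d i j₀ = 0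
    · rw [← hP''P i h, hP''def]
      exact Ideal.subset_span ⟨i, rfl⟩
    · rw [← hmulP i h]
      refine Ideal.mul_mem_left _ _ ?_
      rw [hP''def]
      exact Ideal.subset_span ⟨i, rfl⟩
  have hfin'' : FiniteDimensional ℚ
      (MvPolynomial σ ℚ ⧸ Ideal.span (Set.range (fun i => ∏ j, l j ^ d'' i j))) :=
    fd_quot_mono hJle hfin
  have hD'' : (∑ j, Finset.univ.sup fun i => d'' i j) ≤ D - 1 := by
    have e1 : (∑ j, Finset.univ.sup fun i => d'' i j)
        = (Finset.univ.sup fun i => d'' i j₀)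
          + ∑ j ∈ Finset.univ.erase j₀, Finset.univ.sup fun i => d'' i j :=
      (Finset.add_sum_erase Finset.univ
        (fun j => Finset.univ.sup fun i : ι => d'' i j) (Finset.mem_univ j₀)).symm
    have e2 : (Finset.univ.sup fun i : ι => d i j₀)
          + ∑ j ∈ Finset.univ.erase j₀, Finset.univ.sup (fun i : ι => d i j)
        = ∑ j, Finset.univ.sup fun i : ι => d i j :=
      Finset.add_sum_erase Finset.univ
        (fun j => Finset.univ.sup fun i : ι => d i j) (Finset.mem_univ j₀)
    have hz : (Finset.univ.sup fun i => d'' i j₀) ≤ c - 1 := by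
      refine Finset.sup_le fun i _ => ?_
      simp only [hd''def, if_pos rfl]
      exact Nat.sub_le_sub_right
        (Finset.le_sup (f := fun i : ι => d i j₀) (Finset.mem_univ i)) 1
    have h3 : (∑ j ∈ Finset.univ.erase j₀, Finset.univ.sup fun i => d'' i j)
        = ∑ j ∈ Finset.univ.erase j₀, Finset.univ.sup (fun i : ι => d i j) := by
      refine Finset.sum_congr rfl fun j hj => ?_
      refine Finset.sup_congr rfl fun i _ => ?_
      simp only [hd''def, if_neg (Finset.ne_of_mem_erase hj)]
    omega
  have hBhom : B.IsHomogeneous (m - 1) := by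
    rw [hBdef]; exact homogeneousComponent_isHomogeneous _ _
  have hBmem : B ∈ Ideal.span (Set.range (fun i => ∏ j, l j ^ d'' i j)) :=
    IH (N - 1) (by omega) σ ι κ l hl d'' (D - 1) hD'' (by omega) hfin''
      (m - 1) B hBhom (by omega)
  obtain ⟨b2, hb2⟩ := Ideal.mem_span_range_iff_exists_fun.mp hBmem
  have hfinal : B * l j₀ = ∑ i, b2 i * (l j₀ * P'' i) := by
    rw [← hb2, Finset.sum_mul]
    refine Finset.sum_congr rfl fun i _ => ?_
    rw [hP''def]
    ring
  rw [hBdef] at hfinal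
  rw [hfinal]
  exact Ideal.sum_mem _ fun i _ => Ideal.mul_mem_left _ _ (hℓP'' i)

end EfimovAux

open MvPolynomial

/-- Efimov's lemma.  Let `l₁, …, l_s` be linear forms on `ℚⁿ`,
`Pᵢ = ∏ⱼ lⱼ^{dᵢⱼ}` and `D = ∑ⱼ maxᵢ dᵢⱼ`.  If the ideal `J = (P₁, …, Pᵣ)` has
finite codimension in `ℚ[x₁, …, xₙ]`, then every homogeneous polynomial of
degree at least `D - n + 1` belongs to `J`. -/
theorem stmt3
    (n r s : ℕ) (l : Fin s → MvPolynomial (Fin n) ℚ)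
    (hl : ∀ j, (l j).IsHomogeneous 1)
    (d : Fin r → Fin s → ℕ)
    (P : Fin r → MvPolynomial (Fin n) ℚ)
    (hP : ∀ i, P i = ∏ j, l j ^ d i j)
    (D : ℕ) (hD : D = ∑ j, Finset.univ.sup (fun i => d i j))
    (hfin : FiniteDimensional ℚ
        (MvPolynomial (Fin n) ℚ ⧸ Ideal.span (Set.range P))) :
    ∀ (m : ℕ) (Q : MvPolynomial (Fin n) ℚ), Q.IsHomogeneous m →
      (D : ℤ) - n + 1 ≤ (m : ℤ) → Q ∈ Ideal.span (Set.range P) := by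
  intro m Q hQ hm
  have hPeq : P = fun i => ∏ j, l j ^ d i j := funext hP
  subst hPeq
  refine EfimovAux.master (n + D) (Fin n) (Fin r) (Fin s) l hl d D (le_of_eq hD.symm)
    (by simp) hfin m Q hQ ?_
  simpa using hm
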